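/- Lemma 6 (Rejection of one non-transmitted hypothesis implies rejection of all). Run the partial-information algorithm with self-awareness, under Assumptions 1 and 2. If for a given agent k and one non-transmitted hypothesis θ ∈ Θ∖{θ_TX} the belief satisfies μ_{k,i}(θ) → 0 in probability as i → ∞, then for the same agent k, μ_{k,i}(θ′) → 0 in probability for every θ′ ∈ Θ∖{θ, θ_TX}. -/

import Mathlib

open MeasureTheory ProbabilityTheory Filter Topology

theorem rejection_of_one_nontransmitted_implies_rejection_of_all
    {Ω : Type} [mΩ : MeasurableSpace Ω] (P : Measure Ω) [IsProbabilityMeasure P]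
    (K H : ℕ) (hK : 0 < K) (hH : 2 ≤ H)
    (X : Fin K → Type) [∀ k, MeasurableSpace (X k)]
    (ν : ∀ k, Measure (X k))
    (L : ∀ k : Fin K, Fin H → X k → ℝ)
    (θ0 : Fin H)
    (hLpos : ∀ k θ x, 0 < L k θ x)
    (hLmeas : ∀ k θ, Measurable (L k θ))
    (hLdens : ∀ k θ, ∫ x, L k θ x ∂(ν k) = 1)
    (ξ : ∀ k : Fin K, ℕ → Ω → X k)
    (hξmeas : ∀ k i, Measurable (ξ k i))
    (hξdist : ∀ k (i : ℕ), 1 ≤ i →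
      Measure.map (ξ k i) P = (ν k).withDensity (fun x => ENNReal.ofReal (L k θ0 x)))
    (hξindep : iIndepFun
      (fun (i : ℕ) (ω : Ω) (k : Fin K) => ξ k (i + 1) ω) P)
    (hKL : ∀ k θ θ',
      Integrable (fun x => L k θ x * Real.log (L k θ x / L k θ' x)) (ν k))
    (a : Fin K → Fin K → ℝ)
    (ha_nonneg : ∀ ℓ k, 0 ≤ a ℓ k)
    (ha_stoch : ∀ k, ∑ ℓ, a ℓ k = 1)
    (ha_prim : ∃ n : ℕ, ∀ ℓ k, 0 < ((Matrix.of a) ^ n) ℓ k)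
    (v : Fin K → ℝ)
    (hv_pos : ∀ ℓ, 0 < v ℓ)
    (hv_sum : ∑ ℓ, v ℓ = 1)
    (hv_eig : ∀ ℓ, ∑ k, a ℓ k * v k = v ℓ)
    (ha_self : ∀ k, 0 < a k k)
    (ha_lt : ∀ k, a k k < 1)
    (θTX : Fin H)
    (μb ψ ψh : Fin K → ℕ → Fin H → Ω → ℝ)
    (μinit : Fin K → Fin H → ℝ)
    (hμinit_pos : ∀ k θ, 0 < μinit k θ)
    (hμinit_sum : ∀ k, ∑ θ, μinit k θ = 1)
    (hμb0 : ∀ k θ ω, μb k 0 θ ω = μinit k θ)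
    (hψ : ∀ k (i : ℕ) θ ω, ψ k (i + 1) θ ω =
      μb k i θ ω * L k θ (ξ k (i + 1) ω) /
        ∑ θ', μb k i θ' ω * L k θ' (ξ k (i + 1) ω))
    (hψh_tx : ∀ k (i : ℕ) ω, ψh k (i + 1) θTX ω = ψ k (i + 1) θTX ω)
    (hψh_ntx : ∀ k (i : ℕ) θ ω, θ ≠ θTX →
      ψh k (i + 1) θ ω = (1 - ψ k (i + 1) θTX ω) / ((H : ℝ) - 1))
    (hcomb : ∀ k (i : ℕ) θ ω, μb k (i + 1) θ ω =
      Real.exp (a k k * Real.log (ψ k (i + 1) θ ω) +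
          ∑ ℓ ∈ Finset.univ.erase k, a ℓ k * Real.log (ψh ℓ (i + 1) θ ω)) /
        ∑ θ', Real.exp (a k k * Real.log (ψ k (i + 1) θ' ω) +
          ∑ ℓ ∈ Finset.univ.erase k, a ℓ k * Real.log (ψh ℓ (i + 1) θ' ω)))
    (k : Fin K) (θ : Fin H) (hθ : θ ≠ θTX)
    (hreject : TendstoInMeasure P (fun (i : ℕ) ω => μb k i θ ω) atTop (fun _ => (0 : ℝ))) :
    ∀ θ' : Fin H, θ' ≠ θ → θ' ≠ θTX →
      TendstoInMeasure P (fun (i : ℕ) ω => μb k i θ' ω) atTop (fun _ => (0 : ℝ)) := by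
  intro θ' hθ'θ hθ'TX
  haveI : NeZero H := ⟨by omega⟩
  have a0pos := ha_self k
  have a0lt := ha_lt k
  -- positivity of beliefs of agent k
  have hμpos : ∀ i (θ'' : Fin H) ω, 0 < μb k i θ'' ω := by
    intro i
    induction i with
    | zero => intro θ'' ω; rw [hμb0]; exact hμinit_pos k θ''
    | succ n ih =>
      intro θ'' ω
      rw [hcomb]
      exact div_pos (Real.exp_pos _)
        (Finset.sum_pos (fun θ3 _ => Real.exp_pos _) Finset.univ_nonempty)
  set Z : ℕ → Ω → ℝ := fun i ω =>
    Real.log (L k θ' (ξ k i ω)) - Real.log (L k θ (ξ k i ω)) with hZdef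
  set R : ℕ → Ω → ℝ := fun i ω =>
    Real.log (μb k i θ' ω) - Real.log (μb k i θ ω) with hRdef
  -- recursion for the log-ratio
  have hrec : ∀ i ω, R (i + 1) ω = a k k * (R i ω + Z (i + 1) ω) := by
    intro i ω
    have hD : 0 < ∑ θ3, Real.exp (a k k * Real.log (ψ k (i + 1) θ3 ω) +
          ∑ ℓ ∈ Finset.univ.erase k, a ℓ k * Real.log (ψh ℓ (i + 1) θ3 ω)) :=
      Finset.sum_pos (fun _ _ => Real.exp_pos _) Finset.univ_nonempty
    have hS : 0 < ∑ θ3, μb k i θ3 ω * L k θ3 (ξ k (i + 1) ω) :=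
      Finset.sum_pos (fun θ3 _ => mul_pos (hμpos i θ3 ω) (hLpos k θ3 _))
        Finset.univ_nonempty
    have hlogμ : ∀ θ'' : Fin H, Real.log (μb k (i + 1) θ'' ω) =
        (a k k * Real.log (ψ k (i + 1) θ'' ω) +
          ∑ ℓ ∈ Finset.univ.erase k, a ℓ k * Real.log (ψh ℓ (i + 1) θ'' ω)) -
          Real.log (∑ θ3, Real.exp (a k k * Real.log (ψ k (i + 1) θ3 ω) +
            ∑ ℓ ∈ Finset.univ.erase k, a ℓ k * Real.log (ψh ℓ (i + 1) θ3 ω))) := by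
      intro θ''
      rw [hcomb, Real.log_div (Real.exp_ne_zero _) (ne_of_gt hD), Real.log_exp]
    have hlogψ : ∀ θ'' : Fin H, Real.log (ψ k (i + 1) θ'' ω) =
        Real.log (μb k i θ'' ω) + Real.log (L k θ'' (ξ k (i + 1) ω)) -
          Real.log (∑ θ3, μb k i θ3 ω * L k θ3 (ξ k (i + 1) ω)) := by
      intro θ''
      rw [hψ, Real.log_div (ne_of_gt (mul_pos (hμpos i θ'' ω) (hLpos k θ'' _)))
          (ne_of_gt hS),
        Real.log_mul (ne_of_gt (hμpos i θ'' ω)) (ne_of_gt (hLpos k θ'' _))]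
    have hψh_eq : ∑ ℓ ∈ Finset.univ.erase k, a ℓ k * Real.log (ψh ℓ (i + 1) θ' ω) =
        ∑ ℓ ∈ Finset.univ.erase k, a ℓ k * Real.log (ψh ℓ (i + 1) θ ω) := by
      refine Finset.sum_congr rfl fun ℓ _ => ?_
      rw [hψh_ntx ℓ i θ' ω hθ'TX, hψh_ntx ℓ i θ ω hθ]
    show Real.log (μb k (i + 1) θ' ω) - Real.log (μb k (i + 1) θ ω) =
      a k k * ((Real.log (μb k i θ' ω) - Real.log (μb k i θ ω)) +
        (Real.log (L k θ' (ξ k (i + 1) ω)) - Real.log (L k θ (ξ k (i + 1) ω))))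
    rw [hlogμ θ', hlogμ θ, hψh_eq, hlogψ θ', hlogψ θ]
    ring
  -- ratio identity
  have hratio : ∀ i ω, μb k i θ' ω = Real.exp (R i ω) * μb k i θ ω := by
    intro i ω
    have : Real.exp (R i ω) = μb k i θ' ω / μb k i θ ω := by
      rw [hRdef]
      rw [Real.exp_sub, Real.exp_log (hμpos i θ' ω), Real.exp_log (hμpos i θ ω)]
    rw [this, div_mul_cancel₀ _ (ne_of_gt (hμpos i θ ω))]
  -- integrability of the likelihood log-ratio wrt the signal distribution
  have hfmeas : Measurable (fun x => Real.log (L k θ' x) - Real.log (L k θ x)) :=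
    (Real.measurable_log.comp (hLmeas k θ')).sub (Real.measurable_log.comp (hLmeas k θ))
  have hνint : Integrable (fun x => Real.log (L k θ' x) - Real.log (L k θ x))
      ((ν k).withDensity fun x => ENNReal.ofReal (L k θ0 x)) := by
    have hgm : Measurable (fun x => ENNReal.ofReal (L k θ0 x)) :=
      ENNReal.measurable_ofReal.comp (hLmeas k θ0)
    rw [integrable_withDensity_iff hgm
      (Filter.Eventually.of_forall fun x => ENNReal.ofReal_lt_top)]
    have h2 := (hKL k θ0 θ).sub (hKL k θ0 θ')
    have heq : (fun x => L k θ0 x * Real.log (L k θ0 x / L k θ x) -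
        L k θ0 x * Real.log (L k θ0 x / L k θ' x)) =
        fun x => (Real.log (L k θ' x) - Real.log (L k θ x)) *
          (ENNReal.ofReal (L k θ0 x)).toReal := by
      funext x
      rw [ENNReal.toReal_ofReal (le_of_lt (hLpos k θ0 x)),
        Real.log_div (ne_of_gt (hLpos k θ0 x)) (ne_of_gt (hLpos k θ x)),
        Real.log_div (ne_of_gt (hLpos k θ0 x)) (ne_of_gt (hLpos k θ' x))]
      ring
    rw [← heq]
    exact h2
  have hZint : ∀ i : ℕ, Integrable (Z (i + 1)) P := by
    intro i
    have h1 : Integrable (fun x => Real.log (L k θ' x) - Real.log (L k θ x))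
        (Measure.map (ξ k (i + 1)) P) := by
      rw [hξdist k (i + 1) (by omega)]; exact hνint
    exact (integrable_map_measure hfmeas.aestronglyMeasurable
      (hξmeas k (i + 1)).aemeasurable).mp h1
  set C : ℝ := ∫ x, |Real.log (L k θ' x) - Real.log (L k θ x)|
      ∂((ν k).withDensity fun x => ENNReal.ofReal (L k θ0 x)) with hCdef
  have hZmean : ∀ i : ℕ, ∫ ω, |Z (i + 1) ω| ∂P = C := by
    intro i
    have h1 : ∫ ω, |Z (i + 1) ω| ∂P =
        ∫ x, |Real.log (L k θ' x) - Real.log (L k θ x)| ∂(Measure.map (ξ k (i + 1)) P) := by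
      rw [integral_map (hξmeas k (i + 1)).aemeasurable hfmeas.abs.aestronglyMeasurable]
    rw [h1, hξdist k (i + 1) (by omega)]
  have hCnonneg : 0 ≤ C := integral_nonneg fun x => abs_nonneg _
  set B : ℝ := max |Real.log (μinit k θ') - Real.log (μinit k θ)|
    (a k k * C / (1 - a k k)) with hBdef
  have hBnonneg : 0 ≤ B := le_max_of_le_left (abs_nonneg _)
  -- uniform L¹ bound on R
  have key : ∀ i, Integrable (R i) P ∧ ∫ ω, |R i ω| ∂P ≤ B := by
    intro i
    induction i with
    | zero =>
      have hR0 : R 0 = fun _ => Real.log (μinit k θ') - Real.log (μinit k θ) := by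
        funext ω; rw [hRdef]; simp only [hμb0]
      constructor
      · rw [hR0]; exact integrable_const _
      · rw [hR0]
        simp only [integral_const, probReal_univ, measure_univ, ENNReal.toReal_one, smul_eq_mul, one_mul]
        exact le_max_left _ _
    | succ n ih =>
      obtain ⟨ih1, ih2⟩ := ih
      have hReq : R (n + 1) = fun ω => a k k * (R n ω + Z (n + 1) ω) := funext (hrec n)
      have hint : Integrable (R (n + 1)) P := by
        rw [hReq]; exact ((ih1.add (hZint n)).const_mul _)
      refine ⟨hint, ?_⟩
      have hZC := hZmean n
      have h1 : ∫ ω, |R (n + 1) ω| ∂P = a k k * ∫ ω, |R n ω + Z (n + 1) ω| ∂P := by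
        rw [← integral_const_mul]
        congr 1
        funext ω
        rw [hReq]
        rw [abs_mul, abs_of_pos a0pos]
      have h2 : ∫ ω, |R n ω + Z (n + 1) ω| ∂P ≤ B + C := by
        have h3 : ∫ ω, |R n ω + Z (n + 1) ω| ∂P ≤
            ∫ ω, (|R n ω| + |Z (n + 1) ω|) ∂P := by
          refine integral_mono (ih1.add (hZint n)).abs (ih1.abs.add (hZint n).abs)
            fun ω => abs_add_le _ _
        rw [integral_add ih1.abs (hZint n).abs, hZC] at h3
        linarith
      rw [h1]
      have hfrac : a k k * C / (1 - a k k) ≤ B := le_max_right _ _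
      have h1a : 0 < 1 - a k k := by linarith
      rw [div_le_iff₀ h1a] at hfrac
      nlinarith [mul_le_mul_of_nonneg_left h2 (le_of_lt a0pos)]
  -- Markov bound
  have hMarkov : ∀ (i : ℕ) (M : ℝ), 0 < M →
      P {ω | M ≤ |R i ω|} ≤ ENNReal.ofReal (B / M) := by
    intro i M hM
    obtain ⟨hint, hbd⟩ := key i
    have hmeas : AEMeasurable (fun ω => ENNReal.ofReal |R i ω|) P :=
      ENNReal.measurable_ofReal.comp_aemeasurable
        (measurable_abs.comp_aemeasurable hint.aemeasurable)
    have h1 := mul_meas_ge_le_lintegral₀ hmeas (ENNReal.ofReal M)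
    have hset : {ω | ENNReal.ofReal M ≤ ENNReal.ofReal |R i ω|} = {ω | M ≤ |R i ω|} := by
      ext ω
      simp [ENNReal.ofReal_le_ofReal_iff (abs_nonneg (R i ω))]
    rw [hset] at h1
    have h2 : ∫⁻ ω, ENNReal.ofReal |R i ω| ∂P ≤ ENNReal.ofReal B := by
      rw [← ofReal_integral_eq_lintegral_ofReal hint.abs
        (Filter.Eventually.of_forall fun ω => abs_nonneg _)]
      exact ENNReal.ofReal_le_ofReal hbd
    have h3 : ENNReal.ofReal M * P {ω | M ≤ |R i ω|} ≤ ENNReal.ofReal B := le_trans h1 h2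
    rw [ENNReal.ofReal_div_of_pos hM]
    rw [ENNReal.le_div_iff_mul_le (Or.inl (by simpa using (ENNReal.ofReal_pos.mpr hM).ne'))
      (Or.inl ENNReal.ofReal_ne_top)]
    rwa [mul_comm]
  -- conclusion
  rw [tendstoInMeasure_iff_dist]
  intro ε hε
  rw [ENNReal.tendsto_nhds_zero]
  intro η hη
  set η' : ENNReal := min η 1 with hη'def
  have hη'pos : 0 < η' := lt_min hη zero_lt_one
  have hη'top : η' ≠ ⊤ := ne_top_of_le_ne_top ENNReal.one_ne_top (min_le_right _ _)
  set δ : ℝ := η'.toReal with hδdef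
  have hδpos : 0 < δ := ENNReal.toReal_pos hη'pos.ne' hη'top
  set M : ℝ := 2 * (B + 1) / δ with hMdef
  have hMpos : 0 < M := by positivity
  have hBM : B / M ≤ δ / 2 := by
    have hM' : δ / 2 * M = B + 1 := by
      rw [hMdef]; field_simp
    rw [div_le_iff₀ hMpos, hM']
    linarith
  set ε2 : ℝ := ε * Real.exp (-M) with hε2def
  have hε2pos : 0 < ε2 := mul_pos hε (Real.exp_pos _)
  have hrej := (tendstoInMeasure_iff_dist.mp hreject) ε2 hε2pos
  rw [ENNReal.tendsto_nhds_zero] at hrej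
  have hev := hrej (ENNReal.ofReal (δ / 2)) (ENNReal.ofReal_pos.mpr (by linarith))
  filter_upwards [hev] with i hi
  have hsub : {ω | ε ≤ dist (μb k i θ' ω) 0} ⊆
      {ω | M ≤ |R i ω|} ∪ {ω | ε2 ≤ dist (μb k i θ ω) 0} := by
    intro ω hω
    simp only [Set.mem_setOf_eq, Real.dist_eq, sub_zero] at hω
    by_cases hcase : M ≤ |R i ω|
    · exact Or.inl hcase
    · push_neg at hcase
      right
      simp only [Set.mem_setOf_eq, Real.dist_eq, sub_zero]
      rw [abs_of_pos (hμpos i θ ω)]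
      rw [abs_of_pos (hμpos i θ' ω)] at hω
      have hRle : R i ω ≤ M := le_of_lt (lt_of_le_of_lt (le_abs_self _) hcase)
      have h4 : μb k i θ' ω ≤ Real.exp M * μb k i θ ω := by
        rw [hratio i ω]
        exact mul_le_mul_of_nonneg_right (Real.exp_le_exp.mpr hRle)
          (le_of_lt (hμpos i θ ω))
      have h5 : ε ≤ Real.exp M * μb k i θ ω := le_trans hω h4
      rw [hε2def]
      rw [Real.exp_neg]
      rw [inv_eq_one_div, mul_comm ε, div_mul_eq_mul_div, div_le_iff₀ (Real.exp_pos M)]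
      linarith [mul_comm (μb k i θ ω) (Real.exp M)]
  calc P {ω | ε ≤ dist (μb k i θ' ω) 0}
      ≤ P ({ω | M ≤ |R i ω|} ∪ {ω | ε2 ≤ dist (μb k i θ ω) 0}) := measure_mono hsub
    _ ≤ P {ω | M ≤ |R i ω|} + P {ω | ε2 ≤ dist (μb k i θ ω) 0} := measure_union_le _ _
    _ ≤ ENNReal.ofReal (B / M) + ENNReal.ofReal (δ / 2) := add_le_add (hMarkov i M hMpos) hi
    _ ≤ ENNReal.ofReal (δ / 2) + ENNReal.ofReal (δ / 2) :=
        add_le_add_left (ENNReal.ofReal_le_ofReal hBM) _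
    _ = ENNReal.ofReal δ := by
        rw [← ENNReal.ofReal_add (by linarith) (by linarith)]; norm_num
    _ = η' := by rw [hδdef, ENNReal.ofReal_toReal hη'top]
    _ ≤ η := min_le_left _ _
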